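/- Let G be a finite non-abelian group of order n and let p be the smallest prime dividing n. Then the number of conjugacy classes of G is at least p·|Z(G)| + 1. -/
import Mathlib

open ConjClasses MulAction Subgroup

/-- A subgroup containing a non-central element and the center has card at least `p * |Z|`,
where `p` is the smallest prime dividing `|G|`. -/
lemma aux_card_ge {G : Type*} [Group G] [Finite G] {p : ℕ}
    (hmin : ∀ q : ℕ, q.Prime → q ∣ Nat.card G → p ≤ q)
    (H : Subgroup G) (hle : Subgroup.center G ≤ H) (hne : ¬ H ≤ Subgroup.center G) :
    p * Nat.card (Subgroup.center G) ≤ Nat.card H := by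
  set Z := Subgroup.center G
  set m := Z.relIndex H with hm
  have hzm : Nat.card Z * m = Nat.card H := by
    have := Subgroup.card_mul_index (Z.subgroupOf H)
    rwa [Nat.card_congr (Subgroup.subgroupOfEquivOfLe hle).toEquiv] at this
  have hm1 : m ≠ 1 := by
    intro h1
    exact hne (Subgroup.relIndex_eq_one.mp h1)
  have hm0 : m ≠ 0 := by
    intro h0
    rw [h0, mul_zero] at hzm
    exact (Nat.card_pos (α := H)).ne' hzm.symm
  have hmdvd : m ∣ Nat.card G := by
    have h1 : m * H.index = Z.index := Subgroup.relIndex_mul_index hle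
    exact dvd_trans ⟨H.index, h1.symm⟩ Z.index_dvd_card
  have hpm : p ≤ m := by
    have hq : (m.minFac).Prime := Nat.minFac_prime hm1
    have : p ≤ m.minFac := hmin _ hq (dvd_trans (Nat.minFac_dvd m) hmdvd)
    exact le_trans this (Nat.minFac_le (Nat.pos_of_ne_zero hm0))
  calc p * Nat.card Z ≤ m * Nat.card Z := Nat.mul_le_mul_right _ hpm
    _ = Nat.card H := by rw [mul_comm]; exact hzm

/-- Membership of `toConjAct g` in the center of `ConjAct G` iff `g` central. -/
lemma aux_center_conjAct {G : Type*} [Group G] {g : G} :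
    ConjAct.toConjAct g ∈ Subgroup.center (ConjAct G) ↔ g ∈ Subgroup.center G := by
  constructor
  · intro hg
    rw [Subgroup.mem_center_iff]
    intro h
    have := (Subgroup.mem_center_iff.mp hg) (ConjAct.toConjAct h)
    have := congrArg ConjAct.ofConjAct this
    simpa using this
  · intro hg
    rw [Subgroup.mem_center_iff]
    intro h
    have := (Subgroup.mem_center_iff.mp hg) (ConjAct.ofConjAct h)
    have := congrArg ConjAct.toConjAct this
    simpa using this

theorem card_conjClasses_ge (G : Type*) [Group G] [Finite G]
    (h : ¬ ∀ a b : G, a * b = b * a)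
    (p : ℕ) (hp : p.Prime) (hpd : p ∣ Nat.card G)
    (hmin : ∀ q : ℕ, q.Prime → q ∣ Nat.card G → p ≤ q) :
    p * Nat.card (Subgroup.center G) + 1 ≤ Nat.card (ConjClasses G) := by
  classical
  cases nonempty_fintype G
  set n := Nat.card G with hn
  set z := Nat.card (Subgroup.center G) with hz
  have hz1 : 1 ≤ z := Nat.card_pos
  have hn0 : 0 < n := Nat.card_pos
  -- the center of ConjAct G has the same cardinality
  have hcz : Nat.card (Subgroup.center (ConjAct G)) = z := by
    apply Nat.card_congr
    refine ⟨fun x => ⟨ConjAct.ofConjAct x.1, ?_⟩, fun x => ⟨ConjAct.toConjAct x.1, ?_⟩, ?_, ?_⟩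
    · have := x.2; rw [← ConjAct.toConjAct_ofConjAct x.1] at this
      exact aux_center_conjAct.mp this
    · exact aux_center_conjAct.mpr x.2
    · intro x; simp
    · intro x; simp
  -- Step 1: n > p * z
  have hcenter_ne_top : Subgroup.center G ≠ ⊤ := by
    intro htop
    apply h
    intro a b
    have : a ∈ Subgroup.center G := htop ▸ Subgroup.mem_top a
    exact (Subgroup.mem_center_iff.mp this b).symm
  have hstep1 : p * z < n := by
    set m := (Subgroup.center G).index with hm
    have hzm : z * m = n := Subgroup.card_mul_index _
    have hm1 : m ≠ 1 := fun h1 => hcenter_ne_top (Subgroup.index_eq_one.mp h1)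
    have hm0 : m ≠ 0 := by
      intro h0; rw [h0, mul_zero] at hzm; omega
    have hmdvd : m ∣ n := (Subgroup.center G).index_dvd_card
    have hpm : p ≤ m := by
      have hq : (m.minFac).Prime := Nat.minFac_prime hm1
      exact le_trans (hmin _ hq (dvd_trans (Nat.minFac_dvd m) hmdvd))
        (Nat.minFac_le (Nat.pos_of_ne_zero hm0))
    have hmp : m ≠ p := by
      intro hmp
      -- quotient by center has prime order, hence cyclic, hence G abelian
      have : Nat.card (G ⧸ Subgroup.center G) = p := by
        rw [← hmp]; rfl
      have hcyc : IsCyclic (G ⧸ Subgroup.center G) := by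
        have : Fact p.Prime := ⟨hp⟩
        exact isCyclic_of_prime_card ‹Nat.card (G ⧸ Subgroup.center G) = p›
      have hcomm : ∀ a b : G, a * b = b * a := by
        have := commutative_of_cyclic_center_quotient (QuotientGroup.mk' (Subgroup.center G))
          (by rw [QuotientGroup.ker_mk'])
        intro a b; exact this a b
      exact h hcomm
    have : p < m := lt_of_le_of_ne hpm (Ne.symm hmp)
    calc p * z < m * z := by
          exact Nat.mul_lt_mul_of_lt_of_le this (le_refl z) (by omega)
      _ = n := by rw [mul_comm]; exact hzm
  -- Step 2: for each noncentral class, p * z * card ≤ n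
  have hstep2 : ∀ x ∈ ConjClasses.noncenter G, p * z * Nat.card x.carrier ≤ n := by
    intro x hx
    obtain ⟨g, rfl⟩ := ConjClasses.exists_rep x
    set H := MulAction.stabilizer (ConjAct G) g with hH
    have hcard : Nat.card (ConjClasses.mk g).carrier = H.index := by
      rw [← ConjAct.orbit_eq_carrier_conjClasses]
      exact Nat.card_congr (MulAction.orbitEquivQuotientStabilizer (ConjAct G) g)
    have hle : Subgroup.center (ConjAct G) ≤ H := by
      rw [hH, ConjAct.stabilizer_eq_centralizer]
      exact Subgroup.center_le_centralizer _
    have hgH : ConjAct.toConjAct g ∈ H := by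
      rw [MulAction.mem_stabilizer_iff]
      show ConjAct.toConjAct g • g = g
      rw [ConjAct.toConjAct_smul]
      group
    have hgnc : g ∉ Subgroup.center G := by
      intro hg
      have := (ConjClasses.mk_bijOn G).mapsTo hg
      exact this hx
    have hne : ¬ H ≤ Subgroup.center (ConjAct G) := by
      intro hHle
      exact hgnc (aux_center_conjAct.mp (hHle hgH))
    have hge : p * z ≤ Nat.card H := by
      have := aux_card_ge (G := ConjAct G) (p := p)
        (fun q hq hqd => hmin q hq (by
          rw [hn]
          exact (Nat.card_congr (ConjAct.ofConjAct (G := G)).toEquiv) ▸ hqd)) H hle hne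
      rwa [hcz] at this
    calc p * z * Nat.card (ConjClasses.mk g).carrier
        ≤ Nat.card H * Nat.card (ConjClasses.mk g).carrier :=
          Nat.mul_le_mul_right _ hge
      _ = Nat.card H * H.index := by rw [hcard]
      _ = Nat.card (ConjAct G) := Subgroup.card_mul_index H
      _ = n := Nat.card_congr ConjAct.ofConjAct.toEquiv
  -- Step 3: sums
  set t := (ConjClasses.noncenter G).toFinset with ht
  have hS : z + ∑ x ∈ t, Nat.card x.carrier = n := by
    have := Group.nat_card_center_add_sum_card_noncenter_eq_card G
    rwa [← Set.coe_toFinset (ConjClasses.noncenter G), finsum_mem_coe_finset] at this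
  have hsum : p * z * (∑ x ∈ t, Nat.card x.carrier) ≤ t.card * n := by
    rw [Finset.mul_sum]
    calc ∑ x ∈ t, p * z * Nat.card x.carrier ≤ ∑ _x ∈ t, n :=
          Finset.sum_le_sum (fun x hx => hstep2 x (by rwa [Set.mem_toFinset] at hx))
      _ = t.card * n := by rw [Finset.sum_const, smul_eq_mul]
  -- Step 4: count classes
  have hcount : Nat.card (ConjClasses G) = z + t.card := by
    have h1 : Nat.card (ConjClasses G) = tᶜ.card + t.card := by
      rw [Finset.card_compl_add_card, Nat.card_eq_fintype_card]
    have h2 : (tᶜ : Finset (ConjClasses G)).card = z := by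
      have heq : tᶜ = ((ConjClasses.noncenter G)ᶜ).toFinset := by
        rw [ht, Set.toFinset_compl]
      rw [heq]
      have e : Nat.card (Subgroup.center G) =
          Nat.card ((ConjClasses.noncenter G)ᶜ : Set (ConjClasses G)) :=
        (Nat.card_congr (Equiv.refl _)).trans
          (Nat.card_congr ((ConjClasses.mk_bijOn G).equiv _))
      rw [← Set.ncard_eq_toFinset_card', ← Nat.card_coe_set_eq, ← e, hz]
    rw [h1, h2]
  -- Step 5: conclude arithmetically
  rw [hcount]
  set S := ∑ x ∈ t, Nat.card x.carrier
  set k := t.card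
  by_contra hcon
  push_neg at hcon
  -- hcon : z + k < p * z + 1, i.e. z + k ≤ p * z, so k ≤ (p-1) * z
  have hk : k + z ≤ p * z := by omega
  have h1 : p * z * S ≤ k * n := hsum
  have h2 : z + S = n := hS
  nlinarith [Nat.mul_le_mul_right n hk, hstep1, hz1, Nat.mul_le_mul_left z hstep1.le]
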